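/- Let p be a prime. Then M_p^(0) = {n ∈ {1, 2, 6, 42, 1806} : p ≡ 1 (mod n)}; that is, a positive integer n not divisible by p satisfies S_n(n) ≡ p (mod n) if and only if n ∈ {1, 2, 6, 42, 1806} and p ≡ 1 (mod n). -/

import Mathlib

open Finset

/-- `S k n = ∑_{i=1}^{n} i^k`. -/
def S (k n : ℕ) : ℕ := ∑ i ∈ Finset.Icc 1 n, i ^ k

private lemma image_range_cast (q : ℕ) [NeZero q] :
    (Finset.range q).image (Nat.cast : ℕ → ZMod q) = Finset.univ := by
  ext x
  simp only [Finset.mem_image, Finset.mem_univ, iff_true, Finset.mem_range]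
  exact ⟨x.val, ZMod.val_lt x, ZMod.natCast_rightInverse x⟩

private lemma sum_range_cast_pow (q : ℕ) [NeZero q] (n : ℕ) :
    ∑ i ∈ Finset.range q, ((i : ℕ) : ZMod q) ^ n = ∑ x : ZMod q, x ^ n := by
  classical
  have hinj : ∀ a ∈ Finset.range q, ∀ b ∈ Finset.range q,
      (a : ZMod q) = (b : ZMod q) → a = b := by
    intro a ha b hb hab
    have ha' := Finset.mem_range.mp ha
    have hb' := Finset.mem_range.mp hb
    rw [← ZMod.val_cast_of_lt ha', ← ZMod.val_cast_of_lt hb', hab]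
  rw [← image_range_cast q]
  exact (Finset.sum_image hinj).symm

private lemma sum_pow_zmod (q : ℕ) [NeZero q] (hq : q.Prime) (n : ℕ) (hn : n ≠ 0) :
    ∑ x : ZMod q, x ^ n = if (q - 1) ∣ n then -1 else 0 := by
  haveI : Fact q.Prime := ⟨hq⟩
  classical
  let φ : (ZMod q)ˣ ↪ ZMod q := ⟨fun x ↦ x, fun _ _ h => Units.ext h⟩
  have himg : Finset.univ.map φ = Finset.univ \ {0} := by
    ext x
    simpa only [Finset.mem_map, Finset.mem_univ, Function.Embedding.coeFn_mk, true_and,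
      Finset.mem_sdiff, Finset.mem_singleton, φ] using
        (show (∃ a : (ZMod q)ˣ, φ a = x) ↔ ¬x = 0 from isUnit_iff_ne_zero)
  calc ∑ x : ZMod q, x ^ n
      = ∑ x ∈ Finset.univ \ {(0 : ZMod q)}, x ^ n := by
        rw [← Finset.sum_sdiff (Finset.subset_univ {(0 : ZMod q)}), Finset.sum_singleton,
          zero_pow hn, add_zero]
    _ = ∑ x : (ZMod q)ˣ, ((x : ZMod q)) ^ n := by
        rw [← himg, Finset.sum_map]; rfl
    _ = if (q - 1) ∣ n then -1 else 0 := by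
        have := FiniteField.sum_pow_units (ZMod q) n
        rwa [ZMod.card] at this

private lemma sum_blocks (q m n : ℕ) :
    ∑ i ∈ Finset.range (q * m), ((i : ℕ) : ZMod q) ^ n
      = (m : ZMod q) * ∑ j ∈ Finset.range q, ((j : ℕ) : ZMod q) ^ n := by
  induction m with
  | zero => simp
  | succ m ih =>
    rw [Nat.mul_succ, Finset.sum_range_add, ih]
    have h : ∀ x ∈ Finset.range q, (((q * m + x : ℕ)) : ZMod q) ^ n = ((x : ℕ) : ZMod q) ^ n := by
      intro x _
      congr 1
      push_cast
      simp [ZMod.natCast_self]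
    rw [Finset.sum_congr rfl h]
    push_cast
    ring

private lemma S_mod (q n : ℕ) (hq : q.Prime) (hn : 0 < n) (hqn : q ∣ n) :
    ((S n n : ℕ) : ZMod q) = ((n / q : ℕ) : ZMod q) * (if (q - 1) ∣ n then -1 else 0) := by
  haveI : NeZero q := ⟨hq.ne_zero⟩
  haveI : Fact q.Prime := ⟨hq⟩
  have hn' : n ≠ 0 := hn.ne'
  have h1 : ((S n n : ℕ) : ZMod q) = ∑ i ∈ Finset.Icc 1 n, ((i : ℕ) : ZMod q) ^ n := by
    simp [S]
  have h2 : ∑ i ∈ Finset.Icc 1 n, ((i : ℕ) : ZMod q) ^ n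
      = ∑ i ∈ Finset.range n, ((i : ℕ) : ZMod q) ^ n := by
    have hins : Finset.range (n + 1) = insert 0 (Finset.Icc 1 n) := by
      ext i
      simp only [Finset.mem_range, Finset.mem_insert, Finset.mem_Icc]
      omega
    have hs : ∑ i ∈ Finset.range (n + 1), ((i : ℕ) : ZMod q) ^ n
        = ∑ i ∈ Finset.Icc 1 n, ((i : ℕ) : ZMod q) ^ n := by
      rw [hins, Finset.sum_insert (by simp)]
      simp [zero_pow hn']
    rw [← hs, Finset.sum_range_succ]
    simp [(ZMod.natCast_eq_zero_iff n q).mpr hqn, zero_pow hn']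
  obtain ⟨m, hm⟩ := hqn
  have hdiv : n / q = m := by rw [hm, Nat.mul_div_cancel_left _ hq.pos]
  rw [h1, h2, hdiv, show Finset.range n = Finset.range (q * m) by rw [hm], sum_blocks,
    sum_range_cast_pow, sum_pow_zmod q hq n hn']

private lemma crux (n q : ℕ) (hq : q.Prime) (hn : 0 < n) (hqn : q ∣ n)
    (h1 : (q - 1) ∣ n) (h2 : ((n / q : ℕ) : ZMod q) * (-1) = ((1 : ℕ) : ZMod q)) :
    S n n ≡ 1 [MOD q] := by
  have h := S_mod q n hq hn hqn
  rw [if_pos h1, h2] at h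
  exact (ZMod.natCast_eq_natCast_iff _ _ _).mp h

private lemma pmodq (p q n : ℕ) (hkey : (p : ZMod q) = -(((n / q : ℕ)) : ZMod q))
    (h2 : ((n / q : ℕ) : ZMod q) * (-1) = ((1 : ℕ) : ZMod q)) : p ≡ 1 [MOD q] := by
  apply (ZMod.natCast_eq_natCast_iff _ _ _).mp
  rw [hkey, ← h2]; ring

private lemma glue6 {a b : ℕ} (h2 : a ≡ b [MOD 2]) (h3 : a ≡ b [MOD 3]) : a ≡ b [MOD 6] :=
  (Nat.modEq_and_modEq_iff_modEq_mul (by norm_num)).mp ⟨h2, h3⟩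

private lemma glue42 {a b : ℕ} (h2 : a ≡ b [MOD 6]) (h3 : a ≡ b [MOD 7]) : a ≡ b [MOD 42] :=
  (Nat.modEq_and_modEq_iff_modEq_mul (by norm_num)).mp ⟨h2, h3⟩

private lemma glue1806 {a b : ℕ} (h2 : a ≡ b [MOD 42]) (h3 : a ≡ b [MOD 43]) :
    a ≡ b [MOD 1806] :=
  (Nat.modEq_and_modEq_iff_modEq_mul (by norm_num)).mp ⟨h2, h3⟩

set_option maxRecDepth 100000 in
private lemma divisors1806 (d : ℕ) (hd : d ∣ 1806) :
    d = 1 ∨ d = 2 ∨ d = 3 ∨ d = 6 ∨ d = 7 ∨ d = 14 ∨ d = 21 ∨ d = 42 ∨ d = 43 ∨ d = 86 ∨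
      d = 129 ∨ d = 258 ∨ d = 301 ∨ d = 602 ∨ d = 903 ∨ d = 1806 := by
  have h1 : d ∈ Nat.divisors 1806 := Nat.mem_divisors.mpr ⟨hd, by norm_num⟩
  rw [show Nat.divisors 1806 = {1,2,3,6,7,14,21,42,43,86,129,258,301,602,903,1806} from by
    decide] at h1
  simpa using h1

private lemma classify (n : ℕ) (sqf : Squarefree n)
    (H : ∀ q : ℕ, q.Prime → q ∣ n → (q - 1) ∣ n) :
    n = 1 ∨ n = 2 ∨ n = 6 ∨ n = 42 ∨ n = 1806 := by
  have key : ∀ q : ℕ, q.Prime → q ∣ n → q ∈ ({2, 3, 7, 43} : Finset ℕ) := by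
    intro q
    induction q using Nat.strong_induction_on with
    | _ q ih =>
      intro hq hqn
      have hq1n : (q - 1) ∣ n := H q hq hqn
      have hsq : Squarefree (q - 1) := sqf.squarefree_of_dvd hq1n
      have hq2 : 2 ≤ q := hq.two_le
      have hsub : (q - 1).primeFactors ⊆ ({2, 3, 7, 43} : Finset ℕ) := by
        intro r hr
        rw [Nat.mem_primeFactors] at hr
        obtain ⟨hrp, hrdvd, hne⟩ := hr
        have hrlt : r < q := by
          have := Nat.le_of_dvd (by omega) hrdvd
          omega
        exact ih r hrlt hrp (hrdvd.trans hq1n)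
      have hdvd1806 : (q - 1) ∣ 1806 := by
        calc q - 1 = ∏ p ∈ (q - 1).primeFactors, p :=
              (Nat.prod_primeFactors_of_squarefree hsq).symm
          _ ∣ ∏ p ∈ ({2, 3, 7, 43} : Finset ℕ), p :=
              Finset.prod_dvd_prod_of_subset _ _ _ hsub
          _ = 1806 := by decide
      have hdisj := divisors1806 (q - 1) hdvd1806
      have hq' : q = 2 ∨ q = 3 ∨ q = 4 ∨ q = 7 ∨ q = 8 ∨ q = 15 ∨ q = 22 ∨ q = 43 ∨
          q = 44 ∨ q = 87 ∨ q = 130 ∨ q = 259 ∨ q = 302 ∨ q = 603 ∨ q = 904 ∨ q = 1807 := by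
        omega
      rcases hq' with rfl|rfl|rfl|rfl|rfl|rfl|rfl|rfl|rfl|rfl|rfl|rfl|rfl|rfl|rfl|rfl
      all_goals first
        | decide
        | exact absurd hq (by norm_num)
  have hsub : n.primeFactors ⊆ ({2, 3, 7, 43} : Finset ℕ) := fun q hq =>
    key q (Nat.prime_of_mem_primeFactors hq) (Nat.dvd_of_mem_primeFactors hq)
  have hdvd : n ∣ 1806 := by
    calc n = ∏ p ∈ n.primeFactors, p := (Nat.prod_primeFactors_of_squarefree sqf).symm
      _ ∣ ∏ p ∈ ({2, 3, 7, 43} : Finset ℕ), p := Finset.prod_dvd_prod_of_subset _ _ _ hsub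
      _ = 1806 := by decide
  have hdisj := divisors1806 n hdvd
  rcases hdisj with rfl|rfl|rfl|rfl|rfl|rfl|rfl|rfl|rfl|rfl|rfl|rfl|rfl|rfl|rfl|rfl
  · exact Or.inl rfl
  · exact Or.inr (Or.inl rfl)
  · exact absurd (H 3 (by norm_num) (by norm_num)) (by norm_num)
  · exact Or.inr (Or.inr (Or.inl rfl))
  · exact absurd (H 7 (by norm_num) (by norm_num)) (by norm_num)
  · exact absurd (H 7 (by norm_num) (by norm_num)) (by norm_num)
  · exact absurd (H 3 (by norm_num) (by norm_num)) (by norm_num)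
  · exact Or.inr (Or.inr (Or.inr (Or.inl rfl)))
  · exact absurd (H 43 (by norm_num) (by norm_num)) (by norm_num)
  · exact absurd (H 43 (by norm_num) (by norm_num)) (by norm_num)
  · exact absurd (H 3 (by norm_num) (by norm_num)) (by norm_num)
  · exact absurd (H 43 (by norm_num) (by norm_num)) (by norm_num)
  · exact absurd (H 7 (by norm_num) (by norm_num)) (by norm_num)
  · exact absurd (H 43 (by norm_num) (by norm_num)) (by norm_num)
  · exact absurd (H 3 (by norm_num) (by norm_num)) (by norm_num)
  · exact Or.inr (Or.inr (Or.inr (Or.inr rfl)))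

/-- For a prime `p`, `M_p^(0) = {n ∈ M_1 : p ≡ 1 (mod n)}` where
`M_1 = {1, 2, 6, 42, 1806}`. -/
theorem stmt_4 (p : ℕ) (hp : p.Prime) (n : ℕ) (hn : 0 < n) (hpn : ¬ p ∣ n) :
    S n n ≡ p [MOD n] ↔ (n ∈ ({1, 2, 6, 42, 1806} : Set ℕ) ∧ p ≡ 1 [MOD n]) := by
  constructor
  · intro h
    -- transfer to ZMod q for primes q ∣ n
    have key : ∀ q : ℕ, q.Prime → q ∣ n →
        (q - 1) ∣ n ∧ (p : ZMod q) = -(((n / q : ℕ)) : ZMod q) := by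
      intro q hqp hqd
      have hSm := S_mod q n hqp hn hqd
      have hpq : ((p : ℕ) : ZMod q)
          = ((n / q : ℕ) : ZMod q) * (if (q - 1) ∣ n then -1 else 0) := by
        rw [← hSm]
        exact ((ZMod.natCast_eq_natCast_iff _ _ _).mpr (h.of_dvd hqd)).symm
      have hqnp : ¬ ((p : ZMod q) = 0) := by
        intro h0
        have h1 : q ∣ p := (ZMod.natCast_eq_zero_iff _ _).mp h0
        have h2 : q = p := (Nat.prime_dvd_prime_iff_eq hqp hp).mp h1
        exact hpn (h2 ▸ hqd)
      by_cases hd : (q - 1) ∣ n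
      · refine ⟨hd, ?_⟩
        rw [hpq, if_pos hd]; ring
      · exact absurd (by rw [hpq, if_neg hd, mul_zero]) hqnp
    -- squarefree
    have sqf : Squarefree n := by
      rw [Nat.squarefree_iff_prime_squarefree]
      intro q hqp hqq
      have hqp' : q.Prime := hqp
      have hqd : q ∣ n := (dvd_mul_right q q).trans hqq
      have h0 : ((n / q : ℕ) : ZMod q) = 0 :=
        (ZMod.natCast_eq_zero_iff _ _).mpr ((Nat.dvd_div_iff_mul_dvd hqd).mpr hqq)
      have hkey := (key q hqp' hqd).2
      rw [h0, neg_zero] at hkey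
      have h1 : q ∣ p := (ZMod.natCast_eq_zero_iff _ _).mp hkey
      have h2 : q = p := (Nat.prime_dvd_prime_iff_eq hqp' hp).mp h1
      exact hpn (h2 ▸ hqd)
    have H : ∀ q : ℕ, q.Prime → q ∣ n → (q - 1) ∣ n := fun q a b => (key q a b).1
    have hcl := classify n sqf H
    rcases hcl with rfl|rfl|rfl|rfl|rfl
    · exact ⟨by simp, Nat.modEq_one⟩
    · refine ⟨by simp, ?_⟩
      exact pmodq p 2 2 (key 2 (by norm_num) (by norm_num)).2 (by decide)
    · refine ⟨by simp, ?_⟩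
      exact glue6
        (pmodq p 2 6 (key 2 (by norm_num) (by norm_num)).2 (by decide))
        (pmodq p 3 6 (key 3 (by norm_num) (by norm_num)).2 (by decide))
    · refine ⟨by simp, ?_⟩
      exact glue42
        (glue6
          (pmodq p 2 42 (key 2 (by norm_num) (by norm_num)).2 (by decide))
          (pmodq p 3 42 (key 3 (by norm_num) (by norm_num)).2 (by decide)))
        (pmodq p 7 42 (key 7 (by norm_num) (by norm_num)).2 (by decide))
    · refine ⟨by simp, ?_⟩
      exact glue1806
        (glue42
          (glue6
            (pmodq p 2 1806 (key 2 (by norm_num) (by norm_num)).2 (by decide))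
            (pmodq p 3 1806 (key 3 (by norm_num) (by norm_num)).2 (by decide)))
          (pmodq p 7 1806 (key 7 (by norm_num) (by norm_num)).2 (by decide)))
        (pmodq p 43 1806 (key 43 (by norm_num) (by norm_num)).2 (by decide))
  · rintro ⟨hmem, hp1⟩
    simp only [Set.mem_insert_iff, Set.mem_singleton_iff] at hmem
    rcases hmem with rfl|rfl|rfl|rfl|rfl
    · exact Nat.modEq_one
    · exact (crux 2 2 (by norm_num) (by norm_num) (by norm_num) (by norm_num)
        (by decide)).trans hp1.symm
    · exact glue6
        ((crux 6 2 (by norm_num) (by norm_num) (by norm_num) (by norm_num)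
          (by decide)).trans (hp1.of_dvd (by norm_num)).symm)
        ((crux 6 3 (by norm_num) (by norm_num) (by norm_num) (by norm_num)
          (by decide)).trans (hp1.of_dvd (by norm_num)).symm)
    · exact glue42
        (glue6
          ((crux 42 2 (by norm_num) (by norm_num) (by norm_num) (by norm_num)
            (by decide)).trans (hp1.of_dvd (by norm_num)).symm)
          ((crux 42 3 (by norm_num) (by norm_num) (by norm_num) (by norm_num)
            (by decide)).trans (hp1.of_dvd (by norm_num)).symm))
        ((crux 42 7 (by norm_num) (by norm_num) (by norm_num) (by norm_num)
          (by decide)).trans (hp1.of_dvd (by norm_num)).symm)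
    · exact glue1806
        (glue42
          (glue6
            ((crux 1806 2 (by norm_num) (by norm_num) (by norm_num) (by norm_num)
              (by decide)).trans (hp1.of_dvd (by norm_num)).symm)
            ((crux 1806 3 (by norm_num) (by norm_num) (by norm_num) (by norm_num)
              (by decide)).trans (hp1.of_dvd (by norm_num)).symm))
          ((crux 1806 7 (by norm_num) (by norm_num) (by norm_num) (by norm_num)
            (by decide)).trans (hp1.of_dvd (by norm_num)).symm))
        ((crux 1806 43 (by norm_num) (by norm_num) (by norm_num) (by norm_num)
          (by decide)).trans (hp1.of_dvd (by norm_num)).symm)
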